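/- Fix an odd m ≥ 3 and a ∈ {1,…,m−1}. If f : (ZMod 2)^n → ℝ/ℤ is a nonclassical polynomial of degree < d (annihilated by all d-fold derivatives), then |E_{x∈{0,1}^n}[e(f(x))·ω_m^{a(x₁+⋯+x_n)}]| ≤ exp(−c·n/4^d), where c > 0 depends only on m. -/

import Mathlib

open Finset

/-- Additive directional derivative `D_h f(x) = f(x+h) - f(x)`. -/
noncomputable def D {V M : Type*} [Add V] [AddCommGroup M] (h : V) (f : V → M) : V → M :=
  fun x => f (x + h) - f x

/-- `f` is a nonclassical polynomial of degree at most `d`: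
all `(d+1)`-fold iterated derivatives vanish identically. -/
def IsNCPoly {V M : Type*} [Add V] [AddCommGroup M] (d : ℕ) (f : V → M) : Prop :=
  ∀ hs : List V, hs.length = d + 1 → hs.foldr D f = 0

/-- `e(t) = exp(2πit)` on the torus `ℝ/ℤ`. -/
noncomputable def e : AddCircle (1 : ℝ) → ℂ :=
  Function.Periodic.lift (f := fun t : ℝ => Complex.exp (2 * (Real.pi : ℂ) * Complex.I * (t : ℂ)))
    (by
      intro t
      dsimp only
      rw [Complex.ofReal_add, Complex.ofReal_one, mul_add, mul_one, Complex.exp_add,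
        Complex.exp_two_pi_mul_I, mul_one])

namespace Complex

noncomputable abbrev abs : AbsoluteValue ℂ ℝ := NormedField.toAbsoluteValue ℂ

lemma abs_apply' (z : ℂ) : Complex.abs z = ‖z‖ := rfl

lemma abs_exp (z : ℂ) : Complex.abs (Complex.exp z) = Real.exp z.re := Complex.norm_exp z

lemma abs_conj (z : ℂ) : Complex.abs ((starRingEnd ℂ) z) = Complex.abs z := Complex.norm_conj z

lemma abs_natCast (k : ℕ) : Complex.abs (k : ℂ) = k := by
  rw [abs_apply', Complex.norm_natCast]

lemma abs_exp_ofReal_mul_I (x : ℝ) : Complex.abs (Complex.exp (x * Complex.I)) = 1 :=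
  Complex.norm_exp_ofReal_mul_I x

lemma abs_ofReal (x : ℝ) : Complex.abs (x : ℂ) = |x| := Complex.norm_real x

lemma abs_zpow (z : ℂ) (k : ℤ) : Complex.abs (z ^ k) = Complex.abs z ^ k := norm_zpow z k

lemma norm_eq_abs (z : ℂ) : ‖z‖ = Complex.abs z := rfl

lemma normSq_eq_abs (z : ℂ) : Complex.normSq z = Complex.abs z ^ 2 := by
  rw [abs_apply', Complex.normSq_eq_norm_sq]

end Complex

lemma e_coe (t : ℝ) : e (t : AddCircle (1:ℝ)) =
    Complex.exp (2 * (Real.pi : ℂ) * Complex.I * (t : ℂ)) :=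
  Function.Periodic.lift_coe _ t

lemma e_zero : e 0 = 1 := by
  have h : ((0 : ℝ) : AddCircle (1:ℝ)) = 0 := by norm_num
  rw [← h, e_coe]; simp

lemma e_add (s t : AddCircle (1:ℝ)) : e (s + t) = e s * e t := by
  induction s using QuotientAddGroup.induction_on with
  | H s =>
  induction t using QuotientAddGroup.induction_on with
  | H t =>
  have h : ((s : ℝ) : AddCircle (1:ℝ)) + (t : ℝ) = ((s + t : ℝ) : AddCircle (1:ℝ)) := rfl
  rw [h, e_coe, e_coe, e_coe, ← Complex.exp_add]
  congr 1
  push_cast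
  ring

lemma conj_e (t : AddCircle (1:ℝ)) : (starRingEnd ℂ) (e t) = e (-t) := by
  induction t using QuotientAddGroup.induction_on with
  | H t =>
  have h : -((t : ℝ) : AddCircle (1:ℝ)) = ((-t : ℝ) : AddCircle (1:ℝ)) := rfl
  rw [h, e_coe, e_coe, ← Complex.exp_conj]
  congr 1
  simp only [map_mul, Complex.conj_I, Complex.conj_ofReal, map_ofNat]
  push_cast
  ring

lemma abs_e (t : AddCircle (1:ℝ)) : Complex.abs (e t) = 1 := by
  induction t using QuotientAddGroup.induction_on with
  | H t =>
  rw [e_coe, Complex.abs_exp]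
  norm_num [Complex.mul_re, Complex.mul_im]

noncomputable def Dm {V : Type*} [Add V] (h : V) (G : V → ℂ) : V → ℂ :=
  fun x => G (x + h) * (starRingEnd ℂ) (G x)

noncomputable def gu {V : Type*} [AddCommGroup V] [Fintype V] : ℕ → (V → ℂ) → ℝ
  | 0, G => Complex.abs ((∑ x, G x) / (Fintype.card V : ℂ))
  | (d+1), G => (∑ h, gu d (Dm h G)) / (Fintype.card V : ℝ)

variable {V : Type*} [AddCommGroup V] [Fintype V]

lemma gu_nonneg (d : ℕ) (G : V → ℂ) : 0 ≤ gu d G := by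
  induction d generalizing G with
  | zero => exact AbsoluteValue.nonneg _ _
  | succ d ih =>
    apply div_nonneg (Finset.sum_nonneg fun h _ => ih _) (by positivity)

/-- basic Cauchy-Schwarz step -/
lemma cs_step (H : V → ℂ) :
    Complex.abs ((∑ x, H x) / (Fintype.card V : ℂ)) ^ 2 ≤ gu 1 H := by
  have card_pos : 0 < (Fintype.card V : ℝ) := by
    have : Nonempty V := ⟨0⟩
    exact_mod_cast Fintype.card_pos
  have key : (∑ x, H x) * (starRingEnd ℂ) (∑ y, H y) = ∑ h, ∑ y, Dm h H y := by
    rw [Finset.sum_comm (f := fun h y => Dm h H y)]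
    rw [map_sum, Finset.sum_mul_sum, Finset.sum_comm]
    refine Finset.sum_congr rfl fun y _ => ?_
    rw [show (∑ h, Dm h H y) = (∑ h, H (y + h)) * (starRingEnd ℂ) (H y) by
      rw [Finset.sum_mul]; simp [Dm]]
    rw [show (∑ h, H (y + h)) = ∑ x, H x from
      Fintype.sum_equiv (Equiv.addLeft y) _ _ fun h => rfl]
    rw [Finset.sum_mul]
  have h1 : Complex.abs (∑ x, H x) ^ 2 ≤ ∑ h, Complex.abs (∑ y, Dm h H y) := by
    calc Complex.abs (∑ x, H x) ^ 2
        = Complex.abs ((∑ x, H x) * (starRingEnd ℂ) (∑ y, H y)) := by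
          rw [map_mul, Complex.abs_conj, sq]
      _ = Complex.abs (∑ h, ∑ y, Dm h H y) := by rw [key]
      _ ≤ ∑ h, Complex.abs (∑ y, Dm h H y) := by
          exact Complex.abs.sum_le _ _
  rw [show gu 1 H = (∑ h, Complex.abs ((∑ y, Dm h H y) / (Fintype.card V : ℂ))) /
      (Fintype.card V : ℝ) from rfl]
  rw [map_div₀, Complex.abs_natCast, div_pow]
  rw [div_le_div_iff₀ (by positivity) card_pos]
  calc Complex.abs (∑ x, H x) ^ 2 * (Fintype.card V : ℝ)
      ≤ (∑ h, Complex.abs (∑ y, Dm h H y)) * (Fintype.card V : ℝ) := by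
        exact mul_le_mul_of_nonneg_right h1 card_pos.le
    _ = (∑ h, Complex.abs ((∑ y, Dm h H y) / (Fintype.card V : ℂ))
          * (Fintype.card V : ℝ)) * (Fintype.card V : ℝ) := by
        congr 1
        refine Finset.sum_congr rfl fun h _ => ?_
        rw [map_div₀, Complex.abs_natCast, div_mul_cancel₀]
        exact card_pos.ne'
    _ = (∑ h, Complex.abs ((∑ y, Dm h H y) / (Fintype.card V : ℂ)))
          * (Fintype.card V : ℝ) * (Fintype.card V : ℝ) := by
        rw [← Finset.sum_mul]
    _ = (∑ h, Complex.abs ((∑ y, Dm h H y) / (Fintype.card V : ℂ)))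
          * ((Fintype.card V : ℝ) ^ 2) := by ring

lemma Dm_e_mul (h : V) (f : V → AddCircle (1:ℝ)) (G : V → ℂ) :
    Dm h (fun x => e (f x) * G x) = fun x => e (D h f x) * Dm h G x := by
  funext x
  simp only [Dm, D, map_mul, conj_e]
  rw [show f (x + h) - f x = f (x + h) + -(f x) from sub_eq_add_neg _ _, e_add]
  ring

lemma core (d : ℕ) (f : V → AddCircle (1:ℝ)) (G : V → ℂ)
    (hf : ∀ hs : List V, hs.length = d → hs.foldr D f = 0) :
    Complex.abs ((∑ x, e (f x) * G x) / (Fintype.card V : ℂ)) ^ (2^d) ≤ gu d G := by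
  have card_pos : 0 < (Fintype.card V : ℝ) := by
    have : Nonempty V := ⟨0⟩
    exact_mod_cast Fintype.card_pos
  induction d generalizing f G with
  | zero =>
    have hf0 : f = 0 := hf [] rfl
    subst hf0
    simp only [pow_zero, pow_one, Pi.zero_apply, e_zero, one_mul]
    exact le_of_eq rfl
  | succ d ih =>
    set H : V → ℂ := fun x => e (f x) * G x with hH
    have h2 : (2:ℕ)^(d+1) = 2 * 2^d := by ring
    rw [h2, pow_mul]
    have step1 : (Complex.abs ((∑ x, H x) / (Fintype.card V : ℂ)) ^ 2) ^ (2^d)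
        ≤ (gu 1 H) ^ (2^d) :=
      pow_le_pow_left₀ (by positivity) (cs_step H) _
    refine step1.trans ?_
    have jensen : (gu 1 H) ^ (2^d) ≤ (∑ h, (gu 0 (Dm h H)) ^ (2^d)) / (Fintype.card V : ℝ) := by
      have hk : 2^d = (2^d - 1) + 1 := by
        have : 1 ≤ 2^d := Nat.one_le_two_pow
        omega
      have hJ := pow_sum_div_card_le_sum_pow
        (s := (Finset.univ : Finset V)) (f := fun h => gu 0 (Dm h H))
        (fun i _ => gu_nonneg _ _) (2^d - 1)
      rw [← hk] at hJ
      have hcard : ((Finset.univ : Finset V).card : ℝ) = (Fintype.card V : ℝ) := by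
        simp [Finset.card_univ]
      rw [show gu 1 H = (∑ h, gu 0 (Dm h H)) / (Fintype.card V : ℝ) from rfl]
      rw [div_pow]
      rw [div_le_div_iff₀ (by positivity) card_pos]
      calc (∑ h, gu 0 (Dm h H)) ^ 2^d * (Fintype.card V : ℝ)
          = ((∑ h, gu 0 (Dm h H)) ^ 2^d / (Fintype.card V : ℝ)^(2^d - 1))
            * (Fintype.card V : ℝ)^(2^d - 1) * (Fintype.card V : ℝ) := by
            rw [div_mul_cancel₀]; positivity
        _ ≤ (∑ h, (gu 0 (Dm h H)) ^ (2^d)) * (Fintype.card V : ℝ)^(2^d - 1)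
            * (Fintype.card V : ℝ) := by
            have := hJ
            rw [hcard] at this
            exact mul_le_mul_of_nonneg_right (mul_le_mul_of_nonneg_right this (by positivity))
              card_pos.le
        _ = (∑ h, (gu 0 (Dm h H)) ^ (2^d)) * (Fintype.card V : ℝ)^(2^d) := by
            rw [mul_assoc]
            congr 1
            rw [← pow_succ, ← hk]
    refine jensen.trans ?_
    have per_h : ∀ h : V, (gu 0 (Dm h H)) ^ (2^d) ≤ gu d (Dm h G) := by
      intro h
      have hf' : ∀ hs : List V, hs.length = d → hs.foldr D (D h f) = 0 := by
        intro hs hlen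
        have := hf (hs ++ [h]) (by simp [hlen])
        rwa [List.foldr_append] at this
      have := ih (D h f) (Dm h G) hf'
      rw [show gu 0 (Dm h H) =
          Complex.abs ((∑ x, e (D h f x) * Dm h G x) / (Fintype.card V : ℂ)) from by
        rw [show Dm h H = fun x => e (D h f x) * Dm h G x from Dm_e_mul h f G]
        rfl]
      exact this
    rw [show gu (d+1) G = (∑ h, gu d (Dm h G)) / (Fintype.card V : ℝ) from rfl]
    exact div_le_div_of_nonneg_right (Finset.sum_le_sum fun h _ => per_h h) card_pos.le
      |>.trans_eq rfl

lemma card_fun2 (n : ℕ) : (Fintype.card (Fin n → ZMod 2)) = 2^n := by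
  simp

lemma gu_prod (d : ℕ) (n : ℕ) (g : Fin n → ZMod 2 → ℂ) :
    gu d (fun x : Fin n → ZMod 2 => ∏ i, g i (x i)) = ∏ i, gu d (g i) := by
  induction d generalizing g with
  | zero =>
    show Complex.abs _ = ∏ i, Complex.abs _
    have hsum : (∑ x : Fin n → ZMod 2, ∏ i, g i (x i)) = ∏ i, ∑ y : ZMod 2, g i y := by
      rw [Finset.prod_univ_sum, Fintype.piFinset_univ]
    rw [hsum, card_fun2]
    have hprod : (∏ i, ∑ y : ZMod 2, g i y) / ((2^n : ℕ) : ℂ)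
        = ∏ i : Fin n, ((∑ y : ZMod 2, g i y) / ((Fintype.card (ZMod 2) : ℕ) : ℂ)) := by
      rw [Finset.prod_div_distrib]
      congr 1
      simp [ZMod.card]
    rw [hprod, map_prod]
  | succ d ih =>
    show (∑ h, gu d _) / _ = _
    have hDm : ∀ h : Fin n → ZMod 2,
        Dm h (fun x : Fin n → ZMod 2 => ∏ i, g i (x i))
          = fun x : Fin n → ZMod 2 => ∏ i, Dm (h i) (g i) (x i) := by
      intro h
      funext x
      simp only [Dm, map_prod]
      rw [← Finset.prod_mul_distrib]
      rfl
    have hgu : ∀ h : Fin n → ZMod 2,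
        gu d (Dm h (fun x : Fin n → ZMod 2 => ∏ i, g i (x i)))
          = ∏ i, gu d (Dm (h i) (g i)) := by
      intro h
      rw [hDm h]
      exact ih _
    calc (∑ h : Fin n → ZMod 2,
            gu d (Dm h (fun x : Fin n → ZMod 2 => ∏ i, g i (x i))))
            / ((Fintype.card (Fin n → ZMod 2)) : ℝ)
        = (∏ i : Fin n, ∑ y : ZMod 2, gu d (Dm y (g i))) / ((2^n : ℕ) : ℝ) := by
          rw [card_fun2]
          congr 1
          rw [show (∑ h : Fin n → ZMod 2,
              gu d (Dm h (fun x : Fin n → ZMod 2 => ∏ i, g i (x i))))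
            = ∑ h : Fin n → ZMod 2, ∏ i, gu d (Dm (h i) (g i)) from
            Finset.sum_congr rfl fun h _ => hgu h]
          rw [Finset.prod_univ_sum, Fintype.piFinset_univ]
      _ = ∏ i : Fin n, ((∑ y : ZMod 2, gu d (Dm y (g i))) / ((Fintype.card (ZMod 2)) : ℝ)) := by
          rw [Finset.prod_div_distrib]
          congr 1
          simp [ZMod.card]
      _ = ∏ i, gu (d+1) (g i) := rfl

lemma gu_one (d : ℕ) : gu d (fun _ : ZMod 2 => (1:ℂ)) = 1 := by
  induction d with
  | zero =>
    show Complex.abs _ = 1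
    simp [ZMod.card]
  | succ d ih =>
    show (∑ h : ZMod 2, gu d (Dm h fun _ => (1:ℂ))) / _ = 1
    have : ∀ h : ZMod 2, Dm h (fun _ : ZMod 2 => (1:ℂ)) = fun _ => (1:ℂ) := by
      intro h; funext x; simp [Dm]
    simp only [this, ih]
    simp [ZMod.card]

lemma gu_unit_smul (d : ℕ) (c : ℂ) (hc : Complex.abs c = 1) (G : ZMod 2 → ℂ) :
    gu d (fun x => c * G x) = gu d G := by
  induction d generalizing G with
  | zero =>
    show Complex.abs _ = Complex.abs _
    rw [← Finset.mul_sum, mul_div_assoc, map_mul, hc, one_mul]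
  | succ d ih =>
    show (∑ h, gu d _) / _ = (∑ h, gu d _) / _
    congr 1
    refine Finset.sum_congr rfl fun h _ => ?_
    have : Dm h (fun x => c * G x) = fun x => Dm h G x := by
      funext x
      simp only [Dm, map_mul]
      have : c * (starRingEnd ℂ) c = 1 := by
        rw [Complex.mul_conj]
        norm_cast
        rw [Complex.normSq_eq_abs, hc]
        norm_num
      calc c * G (x + h) * ((starRingEnd ℂ) c * (starRingEnd ℂ) (G x))
          = (c * (starRingEnd ℂ) c) * (G (x + h) * (starRingEnd ℂ) (G x)) := by ring
        _ = G (x + h) * (starRingEnd ℂ) (G x) := by rw [this, one_mul]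
    rw [this]

noncomputable def om (m : ℕ) : ℂ := Complex.exp (2 * (Real.pi:ℂ) * Complex.I / m)

noncomputable def gb (m : ℕ) (b : ℤ) : ZMod 2 → ℂ := fun y => om m ^ (b * (y.val : ℤ))

lemma om_ne_zero (m : ℕ) : om m ≠ 0 := Complex.exp_ne_zero _

lemma abs_om (m : ℕ) : Complex.abs (om m) = 1 := by
  rw [om, show 2 * (Real.pi:ℂ) * Complex.I / m = ((2 * Real.pi / m : ℝ) : ℂ) * Complex.I by
    push_cast; ring]
  exact Complex.abs_exp_ofReal_mul_I _

lemma om_zpow (m : ℕ) (k : ℤ) :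
    om m ^ k = Complex.exp (((Real.pi * (2 * k) / m : ℝ) : ℂ) * Complex.I) := by
  rw [om, ← Complex.exp_int_mul]
  congr 1
  push_cast
  ring

lemma abs_gb (m : ℕ) (b : ℤ) (y : ZMod 2) : Complex.abs (gb m b y) = 1 := by
  rw [gb, map_zpow₀, abs_om, one_zpow]

lemma Dm_zero_gb (m : ℕ) (b : ℤ) : Dm (0 : ZMod 2) (gb m b) = fun _ => (1:ℂ) := by
  funext y
  rw [Dm, add_zero, Complex.mul_conj]
  norm_cast
  rw [Complex.normSq_eq_abs, abs_gb]
  norm_num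

lemma Dm_one_gb (m : ℕ) (b : ℤ) :
    Dm (1 : ZMod 2) (gb m b) = fun y => om m ^ b * gb m (-2*b) y := by
  funext y
  have hconj : ∀ k : ℤ, (starRingEnd ℂ) (om m ^ k) = om m ^ (-k) := by
    intro k
    rw [zpow_neg, Complex.inv_eq_conj]
    rw [norm_zpow, Complex.norm_eq_abs, abs_om, one_zpow]
  fin_cases y
  · show gb m b (0 + 1) * (starRingEnd ℂ) (gb m b 0) = om m ^ b * gb m (-2*b) 0
    rw [zero_add]
    simp only [gb, ZMod.val_one, ZMod.val_zero]
    rw [hconj, ← zpow_add₀ (om_ne_zero m), ← zpow_add₀ (om_ne_zero m)]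
    congr 1; push_cast; ring
  · show gb m b (1 + 1) * (starRingEnd ℂ) (gb m b 1) = om m ^ b * gb m (-2*b) 1
    have h11 : (1 + 1 : ZMod 2) = 0 := by decide
    rw [h11]
    simp only [gb, ZMod.val_one, ZMod.val_zero]
    rw [hconj, ← zpow_add₀ (om_ne_zero m), ← zpow_add₀ (om_ne_zero m)]
    congr 1; push_cast; ring

lemma gu_zero_gb (m : ℕ) (c : ℤ) :
    gu 0 (gb m c) = |Real.cos (Real.pi * c / m)| := by
  show Complex.abs _ = _
  rw [show (∑ x : ZMod 2, gb m c x) = gb m c 0 + gb m c 1 from Fin.sum_univ_two _, ZMod.card]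
  set x : ℝ := Real.pi * c / m with hx
  have h0 : gb m c 0 = 1 := by
    rw [gb]
    simp only [ZMod.val_zero]
    norm_num
  have h1 : gb m c 1 = Complex.exp (((2*x : ℝ) : ℂ) * Complex.I) := by
    rw [gb]
    simp only [ZMod.val_one, mul_one]
    rw [om_zpow]
    congr 3
    rw [hx]; ring
  rw [h0, h1]
  have key : (1 : ℂ) + Complex.exp (((2*x : ℝ) : ℂ) * Complex.I)
      = Complex.exp ((x:ℂ) * Complex.I) * (2 * Complex.cos (x:ℂ)) := by
    rw [show Complex.cos (x:ℂ) =
        (Complex.exp ((x:ℂ) * Complex.I) + Complex.exp (-(x:ℂ) * Complex.I)) / 2 from rfl]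
    rw [show Complex.exp ((x:ℂ)*Complex.I) *
        (2 * ((Complex.exp ((x:ℂ)*Complex.I) + Complex.exp (-(x:ℂ)*Complex.I)) / 2))
        = Complex.exp ((x:ℂ)*Complex.I) * Complex.exp ((x:ℂ)*Complex.I)
          + Complex.exp ((x:ℂ)*Complex.I) * Complex.exp (-(x:ℂ)*Complex.I) by ring]
    rw [← Complex.exp_add, ← Complex.exp_add]
    rw [show (x:ℂ)*Complex.I + -(x:ℂ)*Complex.I = 0 by ring, Complex.exp_zero]
    rw [show (x:ℂ)*Complex.I + (x:ℂ)*Complex.I = ((2*x:ℝ):ℂ)*Complex.I by push_cast; ring]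
    ring
  rw [key, map_div₀, map_mul, Complex.abs_exp_ofReal_mul_I, one_mul, map_mul]
  rw [← Complex.ofReal_cos, Complex.abs_ofReal]
  norm_num

lemma abs_cos_le (m : ℕ) (hm3 : 3 ≤ m) (c : ℤ) (hc : ¬ (m:ℤ) ∣ c) :
    |Real.cos (Real.pi * c / m)| ≤ Real.cos (Real.pi / m) := by
  have hm0 : (0:ℝ) < m := by positivity
  have hpi := Real.pi_pos
  set r : ℤ := c % m with hr
  set k : ℤ := c / m with hk
  have hcr : c = m * k + r := by rw [hr, hk]; exact (Int.mul_ediv_add_emod c m).symm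
  have hr0 : r ≠ 0 := fun h0 => hc (Int.dvd_of_emod_eq_zero h0)
  have hrpos : 0 < r :=
    lt_of_le_of_ne (Int.emod_nonneg c (by exact_mod_cast (by omega : m ≠ 0))) (Ne.symm hr0)
  have hrlt : r < m := Int.emod_lt_of_pos c (by exact_mod_cast (by omega : 0 < m))
  have hangle : Real.pi * c / m = Real.pi * r / m + k * Real.pi := by
    have h : (c:ℝ) = m * k + r := by exact_mod_cast hcr
    rw [h]
    field_simp
    ring
  rw [hangle, Real.cos_add_int_mul_pi, abs_mul]
  rw [show |((-1:ℝ))^k| = 1 by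
    rcases Int.even_or_odd k with hk2 | hk2
    · rw [hk2.neg_one_zpow, abs_one]
    · rw [hk2.neg_one_zpow, abs_neg, abs_one], one_mul]
  set y : ℝ := Real.pi * r / m with hy
  have h1r : (1:ℝ) ≤ r := by exact_mod_cast hrpos
  have hrm : (r:ℝ) ≤ (m:ℝ) - 1 := by
    have h : r ≤ (m:ℤ) - 1 := by omega
    calc (r:ℝ) ≤ ((m:ℤ) - 1 : ℤ) := by exact_mod_cast h
      _ = (m:ℝ) - 1 := by push_cast; ring
  have hylb : Real.pi / m ≤ y := by
    rw [hy, show Real.pi / m = Real.pi * 1 / m by ring]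
    gcongr
  have hyub : y ≤ Real.pi - Real.pi / m := by
    rw [hy, show Real.pi - Real.pi / m = Real.pi * ((m:ℝ) - 1) / m by field_simp]
    gcongr
  have hy0 : (0:ℝ) ≤ y := le_trans (by positivity) hylb
  have hπm : 0 < Real.pi / m := by positivity
  have hyπ : y ≤ Real.pi := hyub.trans (by linarith)
  rw [abs_le]
  constructor
  · have h := Real.cos_le_cos_of_nonneg_of_le_pi hy0 (by linarith) hyub
    rwa [Real.cos_pi_sub] at h
  · exact Real.cos_le_cos_of_nonneg_of_le_pi (by positivity) hyπ hylb

lemma gu_succ_zmod2 (d : ℕ) (G : ZMod 2 → ℂ) :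
    gu (d+1) G = (gu d (Dm 0 G) + gu d (Dm 1 G)) / 2 := by
  show (∑ h : ZMod 2, gu d (Dm h G)) / _ = _
  rw [show (∑ h : ZMod 2, gu d (Dm h G)) = gu d (Dm 0 G) + gu d (Dm 1 G) from
    Fin.sum_univ_two _, ZMod.card]
  norm_num

lemma not_dvd_neg_two_mul (m : ℕ) (hm : Odd m) (b : ℤ) (hb : ¬ (m:ℤ) ∣ b) :
    ¬ (m:ℤ) ∣ (-2*b) := by
  intro h
  apply hb
  have h2 : (m:ℤ) ∣ 2*b := (dvd_neg.mp (by rwa [show -2*b = -(2*b) by ring] at h))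
  have hcop : IsCoprime (m:ℤ) 2 := by
    rw [Int.isCoprime_iff_gcd_eq_one]
    have hg : Int.gcd (m:ℤ) 2 = Nat.gcd m 2 := by simp [Int.gcd]
    rw [hg]
    exact Nat.coprime_two_right.mpr hm
  exact hcop.dvd_of_dvd_mul_left h2

lemma abs_om_zpow (m : ℕ) (b : ℤ) : Complex.abs (om m ^ b) = 1 := by
  rw [Complex.abs_zpow, abs_om, one_zpow]

lemma coord (m : ℕ) (hm : Odd m) (hm3 : 3 ≤ m) (d : ℕ) :
    ∀ b : ℤ, ¬ (m:ℤ) ∣ b →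
      gu (d+1) (gb m b) ≤ 1 - (1 - Real.cos (Real.pi/m))/2 / 2^d := by
  induction d with
  | zero =>
    intro b hb
    rw [gu_succ_zmod2, Dm_zero_gb, Dm_one_gb, gu_one,
      gu_unit_smul 0 _ (abs_om_zpow m b), gu_zero_gb]
    have hle := abs_cos_le m hm3 (-2*b) (not_dvd_neg_two_mul m hm b hb)
    simp only [pow_zero, div_one]
    linarith [hle]
  | succ dd ih =>
    intro b hb
    rw [gu_succ_zmod2, Dm_zero_gb, Dm_one_gb, gu_one,
      gu_unit_smul (dd+1) _ (abs_om_zpow m b)]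
    have hih := ih (-2*b) (not_dvd_neg_two_mul m hm b hb)
    have hrw : (1 - Real.cos (Real.pi/m))/2 / 2^(dd+1)
        = ((1 - Real.cos (Real.pi/m))/2 / 2^dd) / 2 := by
      rw [pow_succ]
      ring
    rw [hrw]
    linarith

theorem stmt4 (m a : ℕ) (hm : Odd m) (hm3 : 3 ≤ m) (ha1 : 1 ≤ a) (ham : a ≤ m - 1) :
    ∃ c : ℝ, 0 < c ∧
      ∀ (n d : ℕ) (f : (Fin n → ZMod 2) → AddCircle (1 : ℝ)),
        (∀ hs : List (Fin n → ZMod 2), hs.length = d → hs.foldr D f = 0) →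
        ‖(∑ x : Fin n → ZMod 2,
              e (f x) * Complex.exp (2 * (Real.pi : ℂ) * Complex.I / (m : ℂ))
                  ^ (a * ∑ i, (x i).val)) / 2 ^ n‖
          ≤ Real.exp (-c * n / 4 ^ d) := by
  have hpi := Real.pi_pos
  have hm0 : (0:ℝ) < m := by positivity
  have hcos1 : Real.cos (Real.pi / m) < 1 := by
    have h := Real.cos_lt_cos_of_nonneg_of_le_pi (le_refl (0:ℝ))
      (show Real.pi / m ≤ Real.pi from div_le_self hpi.le (by exact_mod_cast by omega : (1:ℝ) ≤ m))
      (show (0:ℝ) < Real.pi / m from by positivity)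
    rwa [Real.cos_zero] at h
  have hcosm1 : -1 ≤ Real.cos (Real.pi / m) := Real.neg_one_le_cos _
  set s : ℝ := (1 - Real.cos (Real.pi / m)) / 2 with hs
  have hs0 : 0 < s := by rw [hs]; linarith
  have hs1 : s ≤ 1 := by rw [hs]; linarith
  refine ⟨s / 2, by linarith, ?_⟩
  intro n d f hf
  set e' : ℕ := max d 1 - 1 with he'
  have hee : e' + 1 = max d 1 := by omega
  have hed : e' ≤ d := by omega
  -- degree hypothesis at level e' + 1
  have hf' : ∀ hs : List (Fin n → ZMod 2), hs.length = e' + 1 → hs.foldr D f = 0 := by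
    rcases Nat.eq_zero_or_pos d with hd0 | hdpos
    · subst hd0
      have hf0 : f = 0 := hf [] rfl
      intro hs hlen
      have he0 : e' = 0 := by omega
      rw [he0] at hlen
      obtain ⟨h, rfl⟩ := List.length_eq_one_iff.mp hlen
      show D h f = 0
      rw [hf0]
      funext x
      show (0:AddCircle (1:ℝ)) - 0 = 0
      exact sub_zero 0
    · have : e' + 1 = d := by omega
      rw [this]
      exact hf
  -- rewrite the character as a product
  have hGx : ∀ x : Fin n → ZMod 2,
      Complex.exp (2 * (Real.pi : ℂ) * Complex.I / (m : ℂ)) ^ (a * ∑ i, (x i).val)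
        = ∏ i, gb m (a:ℤ) (x i) := by
    intro x
    rw [show Complex.exp (2 * (Real.pi : ℂ) * Complex.I / (m : ℂ)) = om m from rfl]
    rw [Finset.mul_sum, ← Finset.prod_pow_eq_pow_sum]
    refine Finset.prod_congr rfl fun i _ => ?_
    rw [gb, ← zpow_natCast]
    congr 1
  set G : (Fin n → ZMod 2) → ℂ := fun x => ∏ i, gb m (a:ℤ) (x i) with hG
  have hsum_eq : (∑ x : Fin n → ZMod 2,
        e (f x) * Complex.exp (2 * (Real.pi : ℂ) * Complex.I / (m : ℂ))
          ^ (a * ∑ i, (x i).val))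
      = ∑ x : Fin n → ZMod 2, e (f x) * G x :=
    Finset.sum_congr rfl fun x _ => by rw [hGx x]
  have hcard : ((2:ℂ)^n) = ((Fintype.card (Fin n → ZMod 2) : ℕ) : ℂ) := by
    rw [card_fun2]
    push_cast
    ring
  rw [hsum_eq, hcard]
  set corr : ℝ := Complex.abs
    ((∑ x : Fin n → ZMod 2, e (f x) * G x) / ((Fintype.card (Fin n → ZMod 2) : ℕ) : ℂ))
    with hcorr
  have hcorr0 : 0 ≤ corr := AbsoluteValue.nonneg _ _
  -- main chain
  have hma : ¬ ((m:ℤ)) ∣ (a:ℤ) := by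
    intro hdvd
    have ha0 : (0:ℤ) < a := by exact_mod_cast ha1
    have := Int.le_of_dvd ha0 hdvd
    omega
  have hcore := core (e'+1) f G hf'
  have hprod : gu (e'+1) G = (gu (e'+1) (gb m (a:ℤ)))^n := by
    rw [hG, gu_prod]
    rw [Finset.prod_const, Finset.card_univ, Fintype.card_fin]
  have hcoord := coord m hm hm3 e' (a:ℤ) hma
  have h2e : (0:ℝ) < 2^e' := by positivity
  have hnn : 0 ≤ 1 - s/2^e' := by
    have : s / 2^e' ≤ s := div_le_self hs0.le (one_le_pow₀ (by norm_num))
    linarith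
  have hchain : corr ^ (2^(e'+1)) ≤ (1 - s/2^e')^n := by
    refine (hcore.trans_eq hprod).trans ?_
    exact pow_le_pow_left₀ (gu_nonneg _ _) hcoord n
  have hexp1 : (1 - s/2^e')^n ≤ Real.exp (-(s/2^e') * n) := by
    rw [mul_comm, Real.exp_nat_mul]
    refine pow_le_pow_left₀ hnn ?_ n
    have := Real.add_one_le_exp (-(s/2^e'))
    linarith
  have key : (s/2) * 2^(e'+1) / 4^d ≤ s / 2^e' := by
    have h4 : (4:ℝ)^e' ≤ 4^d := pow_le_pow_right₀ (by norm_num) hed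
    have h4e : (0:ℝ) < 4^e' := by positivity
    have h4d : (0:ℝ) < 4^d := by positivity
    have heq : (s/2) * 2^(e'+1) = s * 2^e' := by rw [pow_succ]; ring
    rw [heq]
    calc s * 2^e' / 4^d ≤ s * 2^e' / 4^e' := by
          apply div_le_div_of_nonneg_left (by positivity) h4e h4
      _ = s / 2^e' := by
          rw [show (4:ℝ)^e' = 2^e' * 2^e' by
            rw [show (4:ℝ) = 2 * 2 by norm_num, mul_pow]]
          field_simp
  have hexp2 : Real.exp (-(s/2^e') * n) ≤ Real.exp (-(s/2) * n / 4^d * 2^(e'+1)) := by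
    rw [Real.exp_le_exp]
    have h5 := mul_le_mul_of_nonneg_right key (show (0:ℝ) ≤ n from Nat.cast_nonneg n)
    rw [show -(s/2) * (n:ℝ) / 4^d * 2^(e'+1) = -(s/2 * 2^(e'+1) / 4^d * n) by ring]
    linarith
  have hfinal : corr ^ (2^(e'+1)) ≤ (Real.exp (-(s/2) * n / 4^d)) ^ (2^(e'+1)) := by
    rw [← Real.exp_nat_mul]
    refine (hchain.trans hexp1).trans (hexp2.trans_eq ?_)
    rw [mul_comm]
    congr 1
    push_cast
    ring
  exact le_of_pow_le_pow_left₀ (by positivity) (Real.exp_nonneg _) hfinal
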